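/- Let L = |v3⟩⟨v1| + |v3⟩⟨v2| on C^3 and define ρ_t as the solution of the Lindblad equation dρ/dt = LρL† − (1/2){L†L, ρ} with initial condition ρ_0 = |v1⟩⟨v1|. Then ⟨v2|ρ_t|v2⟩ = e^{-t} sinh²(t/2), which is strictly positive for all t > 0. -/

import Mathlib

open Matrix

/-- Solution of the scalar linear ODE f' = c·f, f 0 = f₀. -/
lemma ode_exp (f : ℝ → ℂ) (c : ℂ) (h : ∀ t, HasDerivAt f (c * f t) t) :
    ∀ t, f t = Complex.exp (c * t) * f 0 := by
  have hg : ∀ t : ℝ, HasDerivAt (fun s : ℝ => Complex.exp (-(c * s)) * f s) 0 t := by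
    intro t
    have h1 : HasDerivAt (fun s : ℝ => -(c * (s : ℂ))) (-c) t := by
      have := ((hasDerivAt_id t).ofReal_comp (z := t)).const_mul c
      have h' := this.neg
      simp at h'
      exact h'
    have h2 : HasDerivAt (fun s : ℝ => Complex.exp (-(c * s)))
        (Complex.exp (-(c * t)) * (-c)) t := h1.cexp
    have := h2.mul (h t)
    exact this.congr_deriv (by ring)
  have hconst : ∀ t : ℝ, Complex.exp (-(c * t)) * f t = f 0 := by
    intro t
    have := is_const_of_deriv_eq_zero (f := fun s : ℝ => Complex.exp (-(c * s)) * f s)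
      (fun x => (hg x).differentiableAt) (fun x => (hg x).deriv) t 0
    simpa using this
  intro t
  have h1 := hconst t
  have h2 : Complex.exp (c * t) * (Complex.exp (-(c * t)) * f t) = Complex.exp (c * t) * f 0 := by
    rw [h1]
  rwa [← mul_assoc, ← Complex.exp_add, add_neg_cancel, Complex.exp_zero, one_mul] at h2

/-- For L = |v3⟩⟨v1| + |v3⟩⟨v2| on ℂ³ and ρ_t solving the Lindblad equation with
ρ_0 = |v1⟩⟨v1|, we have ⟨v2|ρ_t|v2⟩ = e^{-t} sinh²(t/2) > 0 for t > 0. -/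
theorem stmt1 (L : Matrix (Fin 3) (Fin 3) ℂ) (hL : L = !![0,0,0; 0,0,0; 1,1,0])
    (ρ : ℝ → Matrix (Fin 3) (Fin 3) ℂ)
    (hρ0 : ρ 0 = !![1,0,0; 0,0,0; 0,0,0])
    (hderiv : ∀ (t : ℝ) (i j : Fin 3), HasDerivAt (fun s => ρ s i j)
      ((L * ρ t * Lᴴ - (1/2 : ℂ) • (Lᴴ * L * ρ t + ρ t * (Lᴴ * L))) i j) t) :
    (∀ t : ℝ, ρ t 1 1 = (Real.exp (-t) * (Real.sinh (t/2))^2 : ℝ)) ∧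
    (∀ t : ℝ, 0 < t → 0 < Real.exp (-t) * (Real.sinh (t/2))^2) := by
  subst hL
  refine ⟨?_, fun t ht => mul_pos (Real.exp_pos _)
    (pow_pos (Real.sinh_pos_iff.mpr (by linarith)) 2)⟩
  -- the three decoupled combinations
  have hu : ∀ t, ρ t 0 0 + ρ t 0 1 + ρ t 1 0 + ρ t 1 1 =
      Complex.exp ((-2 : ℂ) * t) := by
    have := ode_exp (fun t => ρ t 0 0 + ρ t 0 1 + ρ t 1 0 + ρ t 1 1) (-2) ?_
    · intro t
      rw [this t]
      simp [hρ0, Matrix.cons_val_zero, Matrix.cons_val_one]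
    · intro t
      have h00 := hderiv t 0 0
      have h01 := hderiv t 0 1
      have h10 := hderiv t 1 0
      have h11 := hderiv t 1 1
      simp [Matrix.mul_apply, Fin.sum_univ_three, Matrix.conjTranspose_apply, Matrix.vecMul,
        dotProduct] at h00 h01 h10 h11
      have := ((h00.add h01).add h10).add h11
      exact this.congr_deriv (by ring)
  have hv : ∀ t, ρ t 0 0 - ρ t 1 1 = Complex.exp ((-1 : ℂ) * t) := by
    have := ode_exp (fun t => ρ t 0 0 - ρ t 1 1) (-1) ?_
    · intro t
      rw [this t]
      simp [hρ0]
    · intro t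
      have h00 := hderiv t 0 0
      have h11 := hderiv t 1 1
      simp [Matrix.mul_apply, Fin.sum_univ_three, Matrix.conjTranspose_apply, Matrix.vecMul,
        dotProduct] at h00 h11
      have := h00.sub h11
      exact this.congr_deriv (by ring)
  have hx : ∀ t, ρ t 0 0 + ρ t 1 1 - ρ t 0 1 - ρ t 1 0 = 1 := by
    have := ode_exp (fun t => ρ t 0 0 + ρ t 1 1 - ρ t 0 1 - ρ t 1 0) 0 ?_
    · intro t
      rw [this t]
      simp [hρ0]
    · intro t
      have h00 := hderiv t 0 0
      have h01 := hderiv t 0 1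
      have h10 := hderiv t 1 0
      have h11 := hderiv t 1 1
      simp [Matrix.mul_apply, Fin.sum_univ_three, Matrix.conjTranspose_apply, Matrix.vecMul,
        dotProduct] at h00 h01 h10 h11
      have := ((h00.add h11).sub h01).sub h10
      exact this.congr_deriv (by ring)
  intro t
  have key : ρ t 1 1 = (Complex.exp ((-2 : ℂ) * t) + 1 - 2 * Complex.exp ((-1 : ℂ) * t)) / 4 := by
    have h1 := hu t
    have h2 := hv t
    have h3 := hx t
    linear_combination h1 / 4 + h3 / 4 - h2 / 2
  rw [key]
  have e1 : Real.exp (-t) = ((Real.exp (t/2))⁻¹)^2 := by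
    rw [← Real.exp_neg, ← Real.exp_nat_mul]
    norm_num
    ring
  have e2 : ((-2 : ℂ) * t) = ((-(2*t) : ℝ) : ℂ) := by push_cast; ring
  have e3 : ((-1 : ℂ) * t) = ((-t : ℝ) : ℂ) := by push_cast; ring
  rw [e2, e3, ← Complex.ofReal_exp, ← Complex.ofReal_exp]
  have goal_real : (Real.exp (-(2*t)) + 1 - 2 * Real.exp (-t)) / 4
      = Real.exp (-t) * (Real.sinh (t/2))^2 := by
    rw [Real.sinh_eq, e1]
    have h4 : Real.exp (-(2*t)) = ((Real.exp (t/2))⁻¹)^4 := by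
      rw [← Real.exp_neg, ← Real.exp_nat_mul]
      norm_num
      ring
    have h5 : Real.exp (-(t/2)) = (Real.exp (t/2))⁻¹ := by
      rw [← Real.exp_neg]
    rw [h4, h5]
    have hq : Real.exp (t/2) ≠ 0 := Real.exp_ne_zero _
    field_simp
    ring
  push_cast [← goal_real]
  ring
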